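/- Let q ∈ ℝ², let ℓ be the horizontal line through q, and let x, y, z ∈ ℝ² be points such that x and z lie strictly below ℓ, y lies strictly above ℓ, and no three of the points q, x, y, z are collinear. Let h be a horizontal line strictly below both x and z, and for p ∈ {x, y, z} let p' denote the intersection point of the line through q and p with h. Then q ∈ conv{x, y, z} if and only if y' lies strictly between x' and z' on h. -/

import Mathlib

/-- The first coordinate of the intersection point of the line through `q` and `p` with
the horizontal line `{x₂ = c}`. -/
noncomputable def projFst (q p : EuclideanSpace ℝ (Fin 2)) (c : ℝ) : ℝ :=
  q 0 + (c - q 1) / (p 1 - q 1) * (p 0 - q 0)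

lemma collinear_of_det_eq (q p r : EuclideanSpace ℝ (Fin 2)) (hp : p 1 - q 1 ≠ 0)
    (hd : (p 0 - q 0) * (r 1 - q 1) - (p 1 - q 1) * (r 0 - q 0) = 0) :
    Collinear ℝ ({q, p, r} : Set (EuclideanSpace ℝ (Fin 2))) := by
  rw [collinear_iff_of_mem (Set.mem_insert q _)]
  refine ⟨p - q, ?_⟩
  intro u hu
  simp only [Set.mem_insert_iff, Set.mem_singleton_iff] at hu
  rcases hu with rfl | rfl | rfl
  · exact ⟨0, by simp⟩
  · exact ⟨1, by simp [vadd_eq_add]⟩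
  · refine ⟨(u 1 - q 1) / (p 1 - q 1), ?_⟩
    rw [vadd_eq_add]
    ext i
    fin_cases i
    · simp only [PiLp.add_apply, PiLp.smul_apply, PiLp.sub_apply, smul_eq_mul, Fin.zero_eta, Fin.mk_one]
      field_simp
      nlinarith [hd]
    · simp only [PiLp.add_apply, PiLp.smul_apply, PiLp.sub_apply, smul_eq_mul, Fin.zero_eta, Fin.mk_one]
      field_simp
      ring

lemma mem_convexHull_of_coeffs (q x y z : EuclideanSpace ℝ (Fin 2)) (α β γ : ℝ)
    (hα : 0 ≤ α) (hβ : 0 ≤ β) (hγ : 0 ≤ γ) (hs : 0 < α + β + γ)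
    (e0 : α * x 0 + β * y 0 + γ * z 0 = (α + β + γ) * q 0)
    (e1 : α * x 1 + β * y 1 + γ * z 1 = (α + β + γ) * q 1) :
    q ∈ convexHull ℝ ({x, y, z} : Set (EuclideanSpace ℝ (Fin 2))) := by
  have hq : q = Finset.univ.centerMass ![α, β, γ] ![x, y, z] := by
    rw [Finset.centerMass]
    ext i
    fin_cases i <;>
      simp only [Fin.sum_univ_three, Matrix.cons_val_zero, Matrix.cons_val_one, Matrix.head_cons,
        Matrix.cons_val_two, Matrix.tail_cons, PiLp.smul_apply, PiLp.add_apply, smul_eq_mul, Fin.zero_eta, Fin.mk_one] <;>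
      field_simp <;> linarith
  rw [hq]
  apply Finset.centerMass_mem_convexHull
  · intro i _; fin_cases i <;> simpa
  · simpa [Fin.sum_univ_three] using hs
  · intro i _; fin_cases i <;> simp

lemma lt_iff_neg_of_eq (X Y K D : ℝ) (hK : 0 < K) (h : Y - X = K * (-D)) :
    X < Y ↔ D < 0 := by
  constructor
  · intro h'
    by_contra hD
    push_neg at hD
    nlinarith [mul_nonneg hK.le hD]
  · intro hD
    nlinarith [mul_pos hK (neg_pos.mpr hD)]

lemma lt_iff_pos_of_eq (X Y K D : ℝ) (hK : 0 < K) (h : Y - X = K * (-D)) :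
    Y < X ↔ 0 < D := by
  constructor
  · intro h'
    by_contra hD
    push_neg at hD
    nlinarith [mul_nonneg hK.le (neg_nonneg.mpr hD)]
  · intro hD
    nlinarith [mul_pos hK hD]

lemma projFst_sub (q p r : EuclideanSpace ℝ (Fin 2)) (c : ℝ)
    (hp : p 1 - q 1 ≠ 0) (hr : r 1 - q 1 ≠ 0) :
    projFst q r c - projFst q p c =
      (c - q 1) / ((p 1 - q 1) * (r 1 - q 1)) *
        (-((p 0 - q 0) * (r 1 - q 1) - (p 1 - q 1) * (r 0 - q 0))) := by
  unfold projFst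
  field_simp
  ring

set_option maxHeartbeats 2000000 in
/-- Let `x, z` lie strictly below the horizontal line through `q` and `y` strictly above it,
with no three of `q, x, y, z` collinear.  Projecting `x, y, z` from `q` onto a horizontal
line `h = {x₂ = c}` strictly below `x` and `z`, the point `q` lies in `conv{x, y, z}` iff
the projection of `y` lies strictly between the projections of `x` and `z` on `h`. -/
theorem mem_convexHull_iff_proj_between (q x y z : EuclideanSpace ℝ (Fin 2))
    (hx : x 1 < q 1) (hz : z 1 < q 1) (hy : q 1 < y 1)
    (h1 : ¬Collinear ℝ ({q, x, y} : Set (EuclideanSpace ℝ (Fin 2))))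
    (h2 : ¬Collinear ℝ ({q, x, z} : Set (EuclideanSpace ℝ (Fin 2))))
    (h3 : ¬Collinear ℝ ({q, y, z} : Set (EuclideanSpace ℝ (Fin 2))))
    (h4 : ¬Collinear ℝ ({x, y, z} : Set (EuclideanSpace ℝ (Fin 2))))
    (c : ℝ) (hcx : c < x 1) (hcz : c < z 1) :
    q ∈ convexHull ℝ ({x, y, z} : Set (EuclideanSpace ℝ (Fin 2))) ↔
      (projFst q x c < projFst q y c ∧ projFst q y c < projFst q z c) ∨
      (projFst q z c < projFst q y c ∧ projFst q y c < projFst q x c) := by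
  obtain ⟨A0, hA0d⟩ : ∃ a, a = x 0 - q 0 := ⟨_, rfl⟩
  obtain ⟨A1, hA1d⟩ : ∃ a, a = x 1 - q 1 := ⟨_, rfl⟩
  obtain ⟨B0, hB0d⟩ : ∃ a, a = y 0 - q 0 := ⟨_, rfl⟩
  obtain ⟨B1, hB1d⟩ : ∃ a, a = y 1 - q 1 := ⟨_, rfl⟩
  obtain ⟨D0, hD0d⟩ : ∃ a, a = z 0 - q 0 := ⟨_, rfl⟩
  obtain ⟨D1, hD1d⟩ : ∃ a, a = z 1 - q 1 := ⟨_, rfl⟩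
  have hA1 : A1 < 0 := by rw [hA1d]; linarith
  have hB1 : 0 < B1 := by rw [hB1d]; linarith
  have hD1 : D1 < 0 := by rw [hD1d]; linarith
  have ht : c - q 1 < 0 := by linarith
  have hDab : A0 * B1 - A1 * B0 ≠ 0 := by
    intro h
    refine h1 (collinear_of_det_eq q x y (by rw [← hA1d]; exact hA1.ne) ?_)
    rw [← hA0d, ← hA1d, ← hB0d, ← hB1d]
    exact h
  have hDbd : B0 * D1 - B1 * D0 ≠ 0 := by
    intro h
    refine h3 (collinear_of_det_eq q y z (by rw [← hB1d]; exact hB1.ne') ?_)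
    rw [← hB0d, ← hB1d, ← hD0d, ← hD1d]
    exact h
  have kxy := projFst_sub q x y c (by rw [← hA1d]; exact hA1.ne) (by rw [← hB1d]; exact hB1.ne')
  have kyz := projFst_sub q y z c (by rw [← hB1d]; exact hB1.ne') (by rw [← hD1d]; exact hD1.ne)
  rw [← hA0d, ← hA1d, ← hB0d, ← hB1d] at kxy
  rw [← hB0d, ← hB1d, ← hD0d, ← hD1d] at kyz
  have Kxy : 0 < (c - q 1) / (A1 * B1) := div_pos_of_neg_of_neg ht (mul_neg_of_neg_of_pos hA1 hB1)
  have Kyz : 0 < (c - q 1) / (B1 * D1) := div_pos_of_neg_of_neg ht (mul_neg_of_pos_of_neg hB1 hD1)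
  rw [lt_iff_neg_of_eq _ _ _ _ Kxy kxy, lt_iff_pos_of_eq _ _ _ _ Kxy kxy,
    lt_iff_neg_of_eq _ _ _ _ Kyz kyz, lt_iff_pos_of_eq _ _ _ _ Kyz kyz]
  constructor
  · -- membership → sign condition
    intro hmem
    rw [show ({x, y, z} : Set (EuclideanSpace ℝ (Fin 2))) = insert x {y, z} from rfl,
      convexHull_insert ⟨y, Set.mem_insert y _⟩] at hmem
    rw [mem_convexJoin] at hmem
    obtain ⟨x', hx', p, hp, hqs⟩ := hmem
    rw [Set.mem_singleton_iff] at hx'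
    rw [hx'] at hqs  -- x' = x
    rw [convexHull_pair] at hp
    obtain ⟨u, v, hu, hv, huv, hpe⟩ := hp
    obtain ⟨a, b, ha, hb, hab, hqe⟩ := hqs
    have hp0 : u * y 0 + v * z 0 = p 0 := by
      have := congrArg (fun w => w 0) hpe
      simpa [PiLp.add_apply, PiLp.smul_apply] using this
    have hp1 : u * y 1 + v * z 1 = p 1 := by
      have := congrArg (fun w => w 1) hpe
      simpa [PiLp.add_apply, PiLp.smul_apply] using this
    have hq0 : a * x 0 + b * p 0 = q 0 := by
      have := congrArg (fun w => w 0) hqe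
      simpa [PiLp.add_apply, PiLp.smul_apply] using this
    have hq1 : a * x 1 + b * p 1 = q 1 := by
      have := congrArg (fun w => w 1) hqe
      simpa [PiLp.add_apply, PiLp.smul_apply] using this
    clear hpe hqe kxy kyz Kxy Kyz h1 h2 h4
    have E0 : a * A0 + (b * u) * B0 + (b * v) * D0 = 0 := by
      rw [hA0d, hB0d, hD0d]
      linear_combination hq0 + b * hp0 - b * q 0 * huv - q 0 * hab
    have E1 : a * A1 + (b * u) * B1 + (b * v) * D1 = 0 := by
      rw [hA1d, hB1d, hD1d]
      linear_combination hq1 + b * hp1 - b * q 1 * huv - q 1 * hab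
    have hsum : a + b * u + b * v = 1 := by
      linear_combination hab + b * huv
    have hbu : 0 < b * u := by
      rcases (mul_nonneg hb hu).lt_or_eq with h | h
      · exact h
      · exfalso
        have hbu0 : b * u = 0 := h.symm
        have E1' : a * A1 + (b * v) * D1 = 0 := by
          linear_combination E1 - B1 * hbu0
        have p1 : a * A1 ≤ 0 := by nlinarith [mul_nonneg ha (neg_nonneg.mpr hA1.le)]
        have p2 : (b * v) * D1 ≤ 0 := by
          nlinarith [mul_nonneg (mul_nonneg hb hv) (neg_nonneg.mpr hD1.le)]
        have q1 : a * A1 = 0 := by linarith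
        have q2 : (b * v) * D1 = 0 := by linarith
        have ha0 : a = 0 := by
          rcases mul_eq_zero.mp q1 with h' | h'
          · exact h'
          · exact absurd h' hA1.ne
        have hbv0 : b * v = 0 := by
          rcases mul_eq_zero.mp q2 with h' | h'
          · exact h'
          · exact absurd h' hD1.ne
        rw [ha0, hbu0, hbv0] at hsum
        norm_num at hsum
    have haa : 0 < a := by
      rcases ha.lt_or_eq with h | h
      · exact h
      · exfalso
        apply hDbd
        have key : (b * u) * (B0 * D1 - B1 * D0) = 0 := by
          linear_combination D1 * E0 - D0 * E1 + (A0 * D1 - A1 * D0) * h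
        have := mul_eq_zero.mp key
        rcases this with h' | h'
        · exact absurd h' hbu.ne'
        · exact h'
    have hbv : 0 < b * v := by
      rcases (mul_nonneg hb hv).lt_or_eq with h | h
      · exact h
      · exfalso
        apply hDab
        have key : a * (A0 * B1 - A1 * B0) = 0 := by
          linear_combination B1 * E0 - B0 * E1 + (B0 * D1 - B1 * D0) * h.symm
        rcases mul_eq_zero.mp key with h' | h'
        · exact absurd h' haa.ne'
        · exact h'
    have hrel : a * (A0 * B1 - A1 * B0) = (b * v) * (B0 * D1 - B1 * D0) := by
      linear_combination B1 * E0 - B0 * E1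
    have hsq : 0 < (B0 * D1 - B1 * D0) ^ 2 := by
      rcases lt_or_gt_of_ne hDbd with h | h <;> nlinarith
    rcases lt_or_gt_of_ne hDbd with hs | hs
    · left
      constructor
      · nlinarith [hrel, haa, hbv, hs]
      · exact hs
    · right
      constructor
      · exact hs
      · nlinarith [hrel, haa, hbv, hs]
  · -- sign condition → membership
    rintro (⟨hab', hbd'⟩ | ⟨hbd', hab'⟩)
    · -- both determinants negative: coefficients (-Dbd, -Dda, -Dab)
      have hDda : 0 < -(D0 * A1 - D1 * A0) := by
        have key : (D0 * A1 - D1 * A0) * B1 =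
            -((B0 * D1 - B1 * D0) * A1) - (A0 * B1 - A1 * B0) * D1 := by ring
        nlinarith [key, hab', hbd', hA1, hD1, hB1]
      apply mem_convexHull_of_coeffs q x y z (-(B0 * D1 - B1 * D0)) (-(D0 * A1 - D1 * A0))
        (-(A0 * B1 - A1 * B0)) (by linarith) (by linarith) (by linarith) (by linarith)
      · rw [hA0d, hA1d, hB0d, hB1d, hD0d, hD1d]; ring
      · rw [hA0d, hA1d, hB0d, hB1d, hD0d, hD1d]; ring
    · -- both determinants positive: coefficients (Dbd, Dda, Dab)
      have hDda : 0 < D0 * A1 - D1 * A0 := by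
        have key : (D0 * A1 - D1 * A0) * B1 =
            -((B0 * D1 - B1 * D0) * A1) - (A0 * B1 - A1 * B0) * D1 := by ring
        nlinarith [key, hab', hbd', hA1, hD1, hB1]
      apply mem_convexHull_of_coeffs q x y z (B0 * D1 - B1 * D0) (D0 * A1 - D1 * A0)
        (A0 * B1 - A1 * B0) (by linarith) (by linarith) (by linarith) (by linarith)
      · rw [hA0d, hA1d, hB0d, hB1d, hD0d, hD1d]; ring
      · rw [hA0d, hA1d, hB0d, hB1d, hD0d, hD1d]; ring
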